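/- Let r ≥ 0 be an integer and let a₁, …, a_{r+1} be natural numbers. Then the determinant of the (r+1)×(r+1) matrix with rational entries M_{j,l} = 1/(a_j + l − 1)! for 1 ≤ j, l ≤ r+1 equals (∏_{1 ≤ l < j ≤ r+1} (a_l − a_j)) / (∏_{j=1}^{r+1} (a_j + r)!), where the differences a_l − a_j are computed in ℤ and the identity holds in ℚ. -/

import Mathlib

open Polynomial Finset

private lemma fact_key (a : ℕ) : ∀ r l : ℕ, l ≤ r →
    (a + l).factorial * ∏ k ∈ Finset.Ioc l r, (a + k) = (a + r).factorial := by
  intro r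
  induction r with
  | zero => intro l hl; interval_cases l; simp
  | succ r ih =>
    intro l hl
    rcases Nat.lt_or_ge l (r + 1) with h | h
    · rw [Finset.prod_Ioc_succ_top (by omega), ← mul_assoc, ih l (by omega)]
      rw [show a + (r + 1) = (a + r) + 1 from rfl, Nat.factorial_succ]
      ring
    · have : l = r + 1 := by omega
      subst this
      simp
private lemma fact_key_q (a : ℕ) (r l : ℕ) (h : l ≤ r) :
    (1 : ℚ) / (a + l).factorial =
      (1 / (a + r).factorial) * ∏ k ∈ Finset.Ioc l r, ((a : ℚ) + k) := by
  have h1 := fact_key a r l h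
  have h2 : ((a + l).factorial : ℚ) ≠ 0 := Nat.cast_ne_zero.mpr (Nat.factorial_ne_zero _)
  have h3 : ((a + r).factorial : ℚ) ≠ 0 := Nat.cast_ne_zero.mpr (Nat.factorial_ne_zero _)
  field_simp
  rw [mul_comm]
  exact_mod_cast (h1.symm.trans (mul_comm _ _))

/-- The Vandermonde-type determinant evaluation
`det (1/(a_j + l - 1)!)_{1 ≤ j,l ≤ r+1} = ∏_{l<j} (a_l - a_j) / ∏_j (a_j + r)!`,
stated with `0`-indexed `j, l : Fin (r+1)` (so the `(j,l)` entry is `1/(a_j + l)!`). -/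
theorem vandermonde_factorial_det (r : ℕ) (a : Fin (r + 1) → ℕ) :
    (Matrix.of fun j l : Fin (r + 1) =>
        (1 : ℚ) / (Nat.factorial (a j + (l : ℕ)))).det =
      ((∏ j : Fin (r + 1), ∏ l ∈ Finset.Iio j, ((a l : ℤ) - (a j : ℤ))) : ℚ) /
        ((∏ j : Fin (r + 1), Nat.factorial (a j + r) : ℕ) : ℚ) := by
  -- the polynomials
  set p : Fin (r + 1) → ℚ[X] := fun l =>
    ∏ k ∈ Finset.Ioc (r - (l : ℕ)) r, (X + C (k : ℚ)) with hp
  have hmonic : ∀ l, (p l).Monic := fun l =>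
    monic_prod_of_monic _ _ fun k _ => monic_X_add_C _
  have hdeg : ∀ l : Fin (r + 1), (p l).natDegree = (l : ℕ) := by
    intro l
    simp only [hp]
    rw [Polynomial.natDegree_prod_of_monic _ _ (fun k _ => monic_X_add_C _)]
    simp only [natDegree_X_add_C]
    rw [Finset.sum_const, Nat.card_Ioc, smul_eq_mul, mul_one]
    omega
  -- the auxiliary matrix
  set N : Matrix (Fin (r + 1)) (Fin (r + 1)) ℚ :=
    Matrix.of (fun j l => ∏ k ∈ Finset.Ioc (l : ℕ) r, ((a j : ℚ) + k)) with hNdef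
  have hM : (Matrix.of fun j l : Fin (r + 1) =>
        (1 : ℚ) / (Nat.factorial (a j + (l : ℕ)))) =
      Matrix.of (fun j l => (1 / ((a j + r).factorial : ℚ)) * N j l) := by
    ext j l
    exact fact_key_q (a j) r l (by omega)
  rw [hM, Matrix.det_mul_column]
  -- compute det N
  have hsub : N.submatrix Fin.revPerm Fin.revPerm =
      Matrix.of (fun i l : Fin (r + 1) => (p l).eval ((a (Fin.rev i) : ℚ))) := by
    ext i l
    simp only [Matrix.submatrix_apply, hNdef, Matrix.of_apply, hp, Polynomial.eval_prod]
    simp only [eval_add, eval_X, eval_C]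
    congr 1
    simp [Fin.val_rev]
  have hN : N.det = ∏ j : Fin (r + 1), ∏ l ∈ Finset.Iio j, ((a l : ℚ) - (a j : ℚ)) := by
    rw [← Matrix.det_submatrix_equiv_self Fin.revPerm N, hsub,
      ← Matrix.det_eval_matrixOfPolynomials_eq_det_vandermonde _ p hdeg hmonic,
      Matrix.det_vandermonde]
    calc ∏ i : Fin (r + 1), ∏ j ∈ Finset.Ioi i, ((a (Fin.rev j) : ℚ) - (a (Fin.rev i) : ℚ))
        = ∏ i : Fin (r + 1), ∏ j ∈ Finset.Ioi (Fin.rev i),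
            ((a (Fin.rev j) : ℚ) - (a (Fin.rev (Fin.rev i)) : ℚ)) :=
          (Equiv.prod_comp Fin.revPerm
            (fun i => ∏ j ∈ Finset.Ioi i, ((a (Fin.rev j) : ℚ) - (a (Fin.rev i) : ℚ)))).symm
      _ = ∏ j : Fin (r + 1), ∏ l ∈ Finset.Iio j, ((a l : ℚ) - (a j : ℚ)) := by
          refine Finset.prod_congr rfl fun i _ => ?_
          rw [Fin.rev_rev]
          refine Finset.prod_bij' (fun j _ => Fin.rev j) (fun l _ => Fin.rev l) ?_ ?_ ?_ ?_ ?_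
          · intro j hj
            simp only [Finset.mem_Ioi] at hj
            simp only [Finset.mem_Iio]
            exact Fin.rev_lt_iff.mpr hj
          · intro l hl
            simp only [Finset.mem_Iio] at hl
            simp only [Finset.mem_Ioi]
            exact Fin.rev_lt_rev.mpr hl
          · intro j _; exact Fin.rev_rev j
          · intro l _; exact Fin.rev_rev l
          · intro j _; rfl
  rw [hN]
  push_cast
  simp only [one_div]
  rw [Finset.prod_inv_distrib, inv_mul_eq_div]
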